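/- arXiv:1011.5215 — 2 statements merged into one kernel-verified Lean document; each statement's English description precedes it below -/
import Mathlib

section
/- Let C be a family of subsets of [n] and a ⊆ [n]. For any k ≥ 1, a belongs to C if and only if the number of k-tuples (c_1,...,c_k) of elements of C with c_1 ∪ ... ∪ c_k = a is odd. -/
open Finset

lemma card_filter_fixed_parity {α : Type*} [DecidableEq α] (s : Finset α) (g : α → α)
    (hmem : ∀ x ∈ s, g x ∈ s) (hinv : ∀ x ∈ s, g (g x) = x) :
    ((s.filter fun x => g x = x).card : ZMod 2) = (s.card : ZMod 2) := by
  classical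
  have hsplit : (s.filter fun x => g x = x).card + (s.filter fun x => ¬ g x = x).card
      = s.card := Finset.card_filter_add_card_filter_not _
  have h0 : (((s.filter fun x => ¬ g x = x).card : ZMod 2)) = 0 := by
    have hsum : (∑ _x ∈ s.filter fun x => ¬ g x = x, (1 : ZMod 2)) = 0 := by
      refine Finset.sum_involution (fun a _ => g a) ?_ ?_ ?_ ?_
      · intro a ha; decide
      · intro a ha _
        exact (Finset.mem_filter.mp ha).2
      · intro a ha
        have h1 := Finset.mem_filter.mp ha
        refine Finset.mem_filter.mpr ⟨hmem a h1.1, ?_⟩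
        intro h
        exact h1.2 (((hinv a h1.1).symm.trans h).symm)
      · intro a ha
        exact hinv a (Finset.mem_filter.mp ha).1
    simpa using hsum
  rw [← hsplit]
  push_cast
  rw [h0, add_zero]

lemma sup_comp_equiv {α : Type*} [Fintype α] [DecidableEq α] {n : ℕ}
    (c : α → Finset (Fin n)) (e : α ≃ α) :
    Finset.univ.sup (c ∘ e) = Finset.univ.sup c := by
  conv_rhs => rw [← Finset.image_univ_equiv e, Finset.sup_image]

lemma sup_univ_succ' {n m : ℕ} (c : Fin (m + 1) → Finset (Fin n)) :
    Finset.univ.sup c = c 0 ⊔ Finset.univ.sup (c ∘ Fin.succ) := by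
  rw [Fin.univ_succ, Finset.sup_cons, Finset.sup_map]
  rfl

/-- Let `C` be a family of subsets of `[n]` and `a ⊆ [n]`. For any `k ≥ 1`,
`a ∈ C` iff the number of `k`-tuples `(c_1,...,c_k)` of elements of `C` with
`c_1 ∪ ... ∪ c_k = a` is odd. -/
theorem mem_iff_odd_coverings (n : ℕ) (C : Finset (Finset (Fin n)))
    (a : Finset (Fin n)) (k : ℕ) (hk : 1 ≤ k) :
    a ∈ C ↔ Odd ((Finset.univ.filter
      (fun c : Fin k → Finset (Fin n) =>
        (∀ i, c i ∈ C) ∧ Finset.univ.sup c = a)).card) := by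
  classical
  induction k, hk using Nat.le_induction with
  | base =>
    have hset : (Finset.univ.filter
        (fun c : Fin 1 → Finset (Fin n) =>
          (∀ i, c i ∈ C) ∧ Finset.univ.sup c = a))
        = if a ∈ C then {fun _ => a} else ∅ := by
      ext c
      have hsup : Finset.univ.sup c = c 0 := by
        simp [Finset.univ_unique]
      rw [Finset.mem_filter]
      split_ifs with h
      · simp only [Finset.mem_singleton, Finset.mem_univ, true_and, hsup,
          Fin.forall_fin_one]
        constructor
        · rintro ⟨_, h2⟩
          funext i
          rw [Subsingleton.elim i 0, h2]
        · rintro rfl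
          exact ⟨h, rfl⟩
      · simp only [Finset.notMem_empty, iff_false, Finset.mem_univ, true_and, hsup,
          Fin.forall_fin_one, not_and]
        intro hc hcz
        exact h (hcz ▸ hc)
    rw [hset]
    split_ifs with h <;> simp [h]
  | succ k hk ih =>
    rw [← ZMod.natCast_eq_one_iff_odd] at ih ⊢
    rw [ih]
    set e : Fin (k + 1) ≃ Fin (k + 1) := Equiv.swap 0 1 with he
    set g : (Fin (k + 1) → Finset (Fin n)) → (Fin (k + 1) → Finset (Fin n)) :=
      fun c => c ∘ e with hg
    set S : Finset (Fin (k + 1) → Finset (Fin n)) := Finset.univ.filter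
      (fun c => (∀ i, c i ∈ C) ∧ Finset.univ.sup c = a) with hS
    have hmem : ∀ c ∈ S, g c ∈ S := by
      intro c hc
      rw [hS, Finset.mem_filter] at hc ⊢
      exact ⟨Finset.mem_univ _, fun i => hc.2.1 _, (sup_comp_equiv c e).trans hc.2.2⟩
    have hinv : ∀ c ∈ S, g (g c) = c := by
      intro c _
      funext i
      simp [hg, he, Function.comp, Equiv.swap_apply_self]
    have h01 : (1 : Fin (k + 1)) = Fin.succ ⟨0, hk⟩ := by
      ext
      simp [Fin.val_one', Fin.val_succ]
      omega
    have hfix : ∀ c : Fin (k + 1) → Finset (Fin n), g c = c ↔ c 0 = c 1 := by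
      intro c
      constructor
      · intro h
        have := congrFun h 0
        simpa [hg, he, Equiv.swap_apply_left] using this.symm
      · intro h
        funext i
        rcases eq_or_ne i 0 with rfl | h0
        · simpa [hg, he, Equiv.swap_apply_left] using h.symm
        rcases eq_or_ne i 1 with rfl | h1
        · simpa [hg, he, Equiv.swap_apply_right] using h
        · simp [hg, he, Equiv.swap_apply_of_ne_of_ne h0 h1]
    have hcard : (S.filter fun c => g c = c).card =
        (Finset.univ.filter
          (fun c : Fin k → Finset (Fin n) =>
            (∀ i, c i ∈ C) ∧ Finset.univ.sup c = a)).card := by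
      refine Finset.card_bij' (fun c _ => c ∘ Fin.succ)
        (fun d _ => Fin.cons (d ⟨0, hk⟩) d) ?_ ?_ ?_ ?_
      · intro c hc
        rw [Finset.mem_filter] at hc
        obtain ⟨hcS, hcfix⟩ := hc
        rw [hS, Finset.mem_filter] at hcS
        obtain ⟨-, hC, hsup⟩ := hcS
        rw [hfix] at hcfix
        refine Finset.mem_filter.mpr ⟨Finset.mem_univ _, fun i => hC _, ?_⟩
        rw [← hsup, sup_univ_succ' c]
        have hle : c 0 ≤ Finset.univ.sup (c ∘ Fin.succ) := by
          rw [hcfix, h01]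
          exact Finset.le_sup (f := c ∘ Fin.succ) (Finset.mem_univ (⟨0, hk⟩ : Fin k))
        rw [sup_eq_right.mpr hle]
      · intro d hd
        rw [Finset.mem_filter] at hd
        obtain ⟨-, hC, hsup⟩ := hd
        have hcomp : (Fin.cons (d ⟨0, hk⟩) d : Fin (k + 1) → Finset (Fin n)) ∘ Fin.succ
            = d := by
          funext i
          simp
        refine Finset.mem_filter.mpr ⟨?_, ?_⟩
        · rw [hS, Finset.mem_filter]
          refine ⟨Finset.mem_univ _, ?_, ?_⟩
          · intro i
            refine Fin.cases ?_ ?_ i <;> simp [hC]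
          · rw [sup_univ_succ', hcomp]
            simp only [Fin.cons_zero, hsup]
            exact sup_eq_right.mpr (hsup ▸ Finset.le_sup (Finset.mem_univ (⟨0, hk⟩ : Fin k)))
        · rw [hfix]
          simp only [Fin.cons_zero, h01, Fin.cons_succ]
      · intro c hc
        have hcf := (hfix c).mp (Finset.mem_filter.mp hc).2
        funext i
        refine Fin.cases ?_ (fun j => ?_) i
        · simp only [Fin.cons_zero]
          show c (Fin.succ ⟨0, hk⟩) = c 0
          rw [← h01, ← hcf]
        · simp only [Fin.cons_succ]
          rfl
      · intro d hd
        funext i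
        simp
    rw [← hcard, card_filter_fixed_parity S g hmem hinv]
end

section
/- The set of operators { x^a ∂^b : a, b ⊆ [n] } is linearly independent over Z_2 in the endomorphism algebra of the space of functions Z_2^n → Z_2, and hence the Z_2-algebra generated by the multiplication operators X_1,...,X_n and the Boolean derivatives ∂_1,...,∂_n is the full endomorphism algebra End_{Z_2}(M(Z_2^n, Z_2)), which has dimension 2^{2n}. -/
open Finset

/-- The space of all functions `Z_2^n → Z_2`. -/
abbrev V (n : ℕ) : Type := (Fin n → ZMod 2) → ZMod 2

/-- Indicator vector of a subset of `[n]`, identifying `P[n]` with `Z_2^n`. -/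
def ind {n : ℕ} (a : Finset (Fin n)) : Fin n → ZMod 2 :=
  fun i => if i ∈ a then 1 else 0

/-- `m^a`: the indicator function of the single point `a`. -/
def mFun {n : ℕ} (a : Finset (Fin n)) : V n :=
  fun b => if b = ind a then 1 else 0

/-- `x^a`: the monomial function, `x^a(b) = 1` iff `a ⊆ b`. -/
def xFun {n : ℕ} (a : Finset (Fin n)) : V n :=
  fun b => if ∀ i ∈ a, b i = 1 then 1 else 0

/-- `w^a = ∏_{i ∈ a} (x_i + 1)`: `w^a(b) = 1` iff `b ⊆ [n] \ a`. -/
def wFun {n : ℕ} (a : Finset (Fin n)) : V n :=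
  fun b => if ∀ i ∈ a, b i = 0 then 1 else 0

/-- The shift operator `s_i`, `(s_i f)(x) = f(x + e_i)`. -/
def shiftOp {n : ℕ} (i : Fin n) : Module.End (ZMod 2) (V n) where
  toFun f := fun x => f (x + Pi.single i 1)
  map_add' f g := rfl
  map_smul' c f := by funext x; rfl

/-- The Boolean partial derivative `∂_i`, `(∂_i f)(x) = f(x + e_i) + f(x)`. -/
def derivOp {n : ℕ} (i : Fin n) : Module.End (ZMod 2) (V n) where
  toFun f := fun x => f (x + Pi.single i 1) + f x
  map_add' f g := by
    funext x
    show (f + g) _ + (f + g) _ = _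
    simp only [Pi.add_apply]
    ring
  map_smul' c f := by
    funext x
    show (c • f) _ + (c • f) _ = _
    simp only [Pi.smul_apply, RingHom.id_apply, smul_eq_mul]
    ring

lemma derivOp_eq_shiftOp_add_one {n : ℕ} (i : Fin n) :
    derivOp (n := n) i = shiftOp i + 1 :=
  LinearMap.ext fun _ => rfl

lemma shiftOp_comm {n : ℕ} (i j : Fin n) : Commute (shiftOp i) (shiftOp (n := n) j) := by
  apply LinearMap.ext; intro f; funext x
  show f (x + Pi.single i 1 + Pi.single j 1) = f (x + Pi.single j 1 + Pi.single i 1)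
  rw [add_right_comm]

lemma derivOp_comm {n : ℕ} (i j : Fin n) : Commute (derivOp i) (derivOp (n := n) j) := by
  rw [derivOp_eq_shiftOp_add_one, derivOp_eq_shiftOp_add_one]
  exact ((shiftOp_comm i j).add_right (Commute.one_right _)).add_left
    ((Commute.one_left _).add_right (Commute.one_right _))

/-- `∂^b = ∏_{i ∈ b} ∂_i`. -/
def derivPow {n : ℕ} (b : Finset (Fin n)) : Module.End (ZMod 2) (V n) :=
  b.noncommProd derivOp (fun i _ j _ _ => derivOp_comm i j)

/-- `s^b = ∏_{i ∈ b} s_i`. -/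
def shiftPow {n : ℕ} (b : Finset (Fin n)) : Module.End (ZMod 2) (V n) :=
  b.noncommProd shiftOp (fun i _ j _ _ => shiftOp_comm i j)

/-- The operator of multiplication by a function `g`. -/
noncomputable def mulOp {n : ℕ} (g : V n) : Module.End (ZMod 2) (V n) :=
  LinearMap.mulLeft (ZMod 2) g

/-- `X_i`: multiplication by the `i`-th coordinate function. -/
noncomputable def XOp {n : ℕ} (i : Fin n) : Module.End (ZMod 2) (V n) :=
  mulOp (fun x => x i)

open scoped symmDiff

section Aux
variable {n : ℕ}

lemma zmod2_cases (x : ZMod 2) : x = 0 ∨ x = 1 := by revert x; decide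

/-- The support of a vector, as a finset. -/
def supp (x : Fin n → ZMod 2) : Finset (Fin n) := Finset.univ.filter (fun i => x i = 1)

lemma mem_supp {x : Fin n → ZMod 2} {i : Fin n} : i ∈ supp x ↔ x i = 1 := by
  simp [supp]

lemma ind_supp (x : Fin n → ZMod 2) : ind (supp x) = x := by
  funext i
  rcases zmod2_cases (x i) with h | h <;> simp [ind, mem_supp, h]

lemma supp_ind (a : Finset (Fin n)) : supp (ind a) = a := by
  ext i
  by_cases h : i ∈ a <;> simp [mem_supp, ind, h]

lemma eq_ind_iff {x : Fin n → ZMod 2} {a : Finset (Fin n)} : x = ind a ↔ supp x = a :=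
  ⟨fun h => h ▸ supp_ind a, fun h => h ▸ (ind_supp x).symm⟩

lemma ind_empty : ind (∅ : Finset (Fin n)) = 0 := by funext i; simp [ind]

lemma ind_insert {i : Fin n} {e : Finset (Fin n)} (h : i ∉ e) :
    ind (insert i e) = Pi.single i 1 + ind e := by
  funext j
  by_cases hj : j = i
  · subst hj; simp [ind, h, Pi.single_apply]
  · by_cases hje : j ∈ e <;> simp [ind, hj, hje, Pi.single_apply]

lemma ind_symmDiff (a b : Finset (Fin n)) : ind (a ∆ b) = ind a + ind b := by
  funext i
  by_cases ha : i ∈ a <;> by_cases hb : i ∈ b <;>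
    simp [ind, Finset.mem_symmDiff, ha, hb] <;> decide

lemma mFun_apply (c : Finset (Fin n)) (x : Fin n → ZMod 2) :
    mFun c x = if supp x = c then 1 else 0 := by
  simp [mFun, eq_ind_iff]

lemma xFun_apply (a : Finset (Fin n)) (x : Fin n → ZMod 2) :
    xFun a x = if a ⊆ supp x then 1 else 0 := by
  simp only [xFun]
  congr 1
  simp only [eq_iff_iff]
  constructor
  · intro h i hi; exact mem_supp.2 (h i hi)
  · intro h i hi; exact mem_supp.1 (h hi)

lemma mulOp_apply (g f : V n) (x : Fin n → ZMod 2) : mulOp g f x = g x * f x := rfl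

lemma shiftPow_apply (e : Finset (Fin n)) (f : V n) (x : Fin n → ZMod 2) :
    shiftPow e f x = f (x + ind e) := by
  induction e using Finset.induction_on generalizing x with
  | empty => simp [shiftPow, Finset.noncommProd_empty, ind_empty]; rfl
  | @insert i e hi ih =>
    rw [show shiftPow (insert i e) = shiftOp i * shiftPow e from
      Finset.noncommProd_insert_of_notMem _ _ _ _ hi]
    show (shiftPow e f) (x + Pi.single i 1) = _
    rw [ih, ind_insert hi, ← add_assoc]

lemma derivPow_insert {i : Fin n} {b : Finset (Fin n)} (h : i ∉ b) :
    derivPow (insert i b) = derivOp i * derivPow b :=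
  Finset.noncommProd_insert_of_notMem _ _ _ _ h

lemma end_add_self (T : Module.End (ZMod 2) (V n)) : T + T = 0 := by
  apply LinearMap.ext; intro f; funext x
  show T f x + T f x = 0
  generalize T f x = y; revert y; decide

lemma shiftPow_eq_sum_derivPow (e : Finset (Fin n)) :
    shiftPow e = ∑ b ∈ e.powerset, derivPow b := by
  induction e using Finset.induction_on with
  | empty => simp [shiftPow, derivPow, Finset.noncommProd_empty]; rfl
  | @insert i e hi ih =>
    have hshift : shiftOp (n := n) i = derivOp i + 1 := by
      rw [derivOp_eq_shiftOp_add_one, add_assoc, end_add_self, add_zero]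
    rw [show shiftPow (insert i e) = shiftOp i * shiftPow e from
      Finset.noncommProd_insert_of_notMem _ _ _ _ hi]
    show shiftOp i * shiftPow e = _
    rw [hshift, ih, Finset.powerset_insert, Finset.sum_union]
    · rw [Finset.sum_image ?hinj]
      case hinj =>
        intro b hb c hc hbc
        have hbi : i ∉ b := fun h => hi (Finset.mem_powerset.1 hb h)
        have hci : i ∉ c := fun h => hi (Finset.mem_powerset.1 hc h)
        have := congrArg (Finset.erase · i) hbc
        simpa [Finset.erase_insert hbi, Finset.erase_insert hci] using this
      rw [add_mul, one_mul, Finset.mul_sum, add_comm]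
      congr 1
      apply Finset.sum_congr rfl
      intro b hb
      rw [derivPow_insert (fun hib => hi (Finset.mem_powerset.1 hb hib))]
    · rw [Finset.disjoint_right]
      rintro b hb hb'
      rw [Finset.mem_image] at hb
      obtain ⟨c, _, rfl⟩ := hb
      exact hi (Finset.mem_powerset.1 hb' (Finset.mem_insert_self i c))

lemma mulOp_sum {ι : Type*} (s : Finset ι) (g : ι → V n) :
    mulOp (∑ i ∈ s, g i) = ∑ i ∈ s, mulOp (g i) := by
  apply LinearMap.ext; intro f; funext x
  rw [LinearMap.sum_apply]
  simp [mulOp_apply, Finset.sum_apply, Finset.sum_mul]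

lemma mFun_eq_sum_xFun (c : Finset (Fin n)) :
    mFun c = ∑ a ∈ Finset.univ.filter (fun a => c ⊆ a), xFun a := by
  funext x
  rw [Finset.sum_apply]
  simp only [xFun_apply]
  rw [Finset.sum_boole]
  have hff : (Finset.filter (fun a => a ⊆ supp x) (Finset.univ.filter (fun a => c ⊆ a)))
      = Finset.Icc c (supp x) := by
    ext a
    simp [Finset.mem_Icc, and_comm, Finset.le_iff_subset]
  rw [hff, mFun_apply]
  by_cases h : c ⊆ supp x
  · rw [Finset.card_Icc_finset h]
    by_cases he : supp x = c
    · subst he; simp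
    · have hlt : c.card < (supp x).card :=
        Finset.card_lt_card (lt_of_le_of_ne h (fun hh => he hh.symm) : c ⊂ supp x)
      have hpos : (supp x).card - c.card ≠ 0 := by omega
      have hz : (((2:ℕ) ^ ((supp x).card - c.card) : ℕ) : ZMod 2) = 0 := by
        rw [Nat.cast_pow]
        have h2 : ((2:ℕ) : ZMod 2) = 0 := by decide
        rw [h2, zero_pow hpos]
      rw [hz, if_neg he]
  · have hne : supp x ≠ c := fun hh => h (hh ▸ le_refl _)
    rw [Finset.Icc_eq_empty (fun hh => h hh)]
    simp [hne]

lemma sum_mFun (g : V n) : ∑ d : Finset (Fin n), g (ind d) • mFun d = g := by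
  funext x
  rw [Finset.sum_apply]
  simp only [Pi.smul_apply, smul_eq_mul, mFun_apply, mul_ite, mul_one, mul_zero]
  rw [Finset.sum_ite_eq]
  simp [ind_supp]

lemma matrixUnit (c d : Finset (Fin n)) (f : V n) (x : Fin n → ZMod 2) :
    (mulOp (mFun c) * shiftPow (c ∆ d)) f x = mFun c x * f (ind d) := by
  show mFun c x * (shiftPow (c ∆ d) f x) = _
  rw [shiftPow_apply]
  by_cases h : supp x = c
  · have hx : x = ind c := eq_ind_iff.2 h
    rw [hx, ← ind_symmDiff, symmDiff_symmDiff_cancel_left]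
  · rw [mFun_apply, if_neg h, zero_mul, zero_mul]

end Aux

lemma top_le_span (n : ℕ) :
    ⊤ ≤ Submodule.span (ZMod 2) (Set.range
      (fun p : Finset (Fin n) × Finset (Fin n) => mulOp (xFun p.1) * derivPow p.2)) := by
  set S := Submodule.span (ZMod 2) (Set.range
      (fun p : Finset (Fin n) × Finset (Fin n) => mulOp (xFun p.1) * derivPow p.2)) with hS
  have hmem : ∀ c e : Finset (Fin n), mulOp (mFun c) * shiftPow e ∈ S := by
    intro c e
    rw [mFun_eq_sum_xFun, mulOp_sum, shiftPow_eq_sum_derivPow, Finset.sum_mul]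
    apply Submodule.sum_mem
    intro a _
    rw [Finset.mul_sum]
    apply Submodule.sum_mem
    intro b _
    exact Submodule.subset_span ⟨(a, b), rfl⟩
  intro T _
  have hT : T = ∑ p : Finset (Fin n) × Finset (Fin n),
      (T (mFun p.2) (ind p.1)) • (mulOp (mFun p.1) * shiftPow (p.1 ∆ p.2)) := by
    apply LinearMap.ext; intro f; funext x
    rw [LinearMap.sum_apply, Finset.sum_apply]
    have hterm : ∀ p : Finset (Fin n) × Finset (Fin n),
        ((T (mFun p.2) (ind p.1)) • (mulOp (mFun p.1) * shiftPow (p.1 ∆ p.2))) f x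
          = T (mFun p.2) (ind p.1) * (mFun p.1 x * f (ind p.2)) := by
      intro p
      show T (mFun p.2) (ind p.1) * ((mulOp (mFun p.1) * shiftPow (p.1 ∆ p.2)) f x) = _
      rw [matrixUnit]
    simp only [hterm, mFun_apply, mul_ite, mul_one, mul_zero, ite_mul, zero_mul, one_mul]
    rw [Fintype.sum_prod_type]
    have hinner : ∀ c : Finset (Fin n),
        (∑ d : Finset (Fin n), if supp x = c then T (mFun d) (ind c) * f (ind d) else 0)
          = if supp x = c then (∑ d : Finset (Fin n), T (mFun d) (ind c) * f (ind d)) else 0 := by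
      intro c
      by_cases h : supp x = c <;> simp [h]
    simp only [hinner]
    rw [Finset.sum_ite_eq, if_pos (Finset.mem_univ _), ind_supp]
    conv_lhs => rw [← sum_mFun f, map_sum, Finset.sum_apply]
    apply Finset.sum_congr rfl
    intro d _
    rw [map_smul]
    show f (ind d) * T (mFun d) x = _
    rw [mul_comm]
  rw [hT]
  exact Submodule.sum_mem _ fun p _ => Submodule.smul_mem _ _ (hmem p.1 _)

/-- The operators `x^a ∂^b` are linearly independent over `Z_2`; hence the algebra
generated by the `X_i` and `∂_i` is the full endomorphism algebra of
`M(Z_2^n, Z_2)`, which has dimension `2^{2n}`. -/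
theorem bdo_eq_full_end (n : ℕ) :
    LinearIndependent (ZMod 2)
      (fun p : Finset (Fin n) × Finset (Fin n) => mulOp (xFun p.1) * derivPow p.2) ∧
    Algebra.adjoin (ZMod 2) (Set.range (XOp (n := n)) ∪ Set.range (derivOp (n := n))) = ⊤ ∧
    Module.finrank (ZMod 2) (Module.End (ZMod 2) (V n)) = 2 ^ (2 * n) := by
  have hV : Module.finrank (ZMod 2) (V n) = 2 ^ n := by
    rw [Module.finrank_fintype_fun_eq_card]
    simp [ZMod.card]
  have hEnd : Module.finrank (ZMod 2) (Module.End (ZMod 2) (V n)) = 2 ^ (2 * n) := by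
    rw [Module.finrank_linearMap, hV, ← pow_add, two_mul]
  have hcard : Fintype.card (Finset (Fin n) × Finset (Fin n))
      = Module.finrank (ZMod 2) (Module.End (ZMod 2) (V n)) := by
    rw [hEnd]
    simp [two_mul, pow_add]
  refine ⟨linearIndependent_of_top_le_span_of_card_eq_finrank (top_le_span n) hcard, ?_, hEnd⟩
  set A := Algebra.adjoin (ZMod 2) (Set.range (XOp (n := n)) ∪ Set.range (derivOp (n := n)))
    with hA
  have hX : ∀ a : Finset (Fin n), mulOp (xFun a) ∈ A := by
    intro a
    induction a using Finset.induction_on with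
    | empty =>
      have h1 : xFun (∅ : Finset (Fin n)) = 1 := by funext x; simp [xFun]
      rw [h1]
      have : mulOp (1 : V n) = 1 := LinearMap.mulLeft_one (ZMod 2) (V n)
      rw [this]
      exact one_mem A
    | @insert i a hi ih =>
      have hsplit : xFun (insert i a) = (fun x : Fin n → ZMod 2 => x i) * xFun a := by
        funext x
        rcases zmod2_cases (x i) with h | h <;>
          simp [xFun, Finset.forall_mem_insert, h] <;> decide
      rw [hsplit]
      have hmul : mulOp ((fun x : Fin n → ZMod 2 => x i) * xFun a)
          = XOp i * mulOp (xFun a) := by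
        apply LinearMap.ext; intro h; funext y
        show ((fun x : Fin n → ZMod 2 => x i) * xFun a) y * h y
          = (fun x : Fin n → ZMod 2 => x i) y * (xFun a y * h y)
        simp [mul_assoc]
      rw [hmul]
      exact mul_mem (Algebra.subset_adjoin (Or.inl ⟨i, rfl⟩)) ih
  have hD : ∀ b : Finset (Fin n), derivPow b ∈ A := by
    intro b
    induction b using Finset.induction_on with
    | empty =>
      have : derivPow (∅ : Finset (Fin n)) = 1 := Finset.noncommProd_empty _ _
      rw [this]; exact one_mem A
    | @insert i b hi ih =>
      rw [derivPow_insert hi]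
      exact mul_mem (Algebra.subset_adjoin (Or.inr ⟨i, rfl⟩)) ih
  rw [eq_top_iff]
  intro T _
  have hsub : Set.range
      (fun p : Finset (Fin n) × Finset (Fin n) => mulOp (xFun p.1) * derivPow p.2)
        ⊆ (Subalgebra.toSubmodule A : Submodule (ZMod 2) (Module.End (ZMod 2) (V n))) := by
    rintro _ ⟨p, rfl⟩
    exact (Subalgebra.mem_toSubmodule _).2 (mul_mem (hX p.1) (hD p.2))
  exact (Subalgebra.mem_toSubmodule _).1 (Submodule.span_le.2 hsub (top_le_span n trivial))
end
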